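/- Let {E_α}_{α∈κ} be a family of orthocomplemented complete lattices, F_κ the lattice of choice functions A : κ → ⋃ E_α with A(α) ∈ E_α (with all functions having some component 0 identified with the constant-0 function), and ⊗_{α∈κ} E_α the fixed-point logic of ** on D(F_κ). Then each map i_α : E_α → ⊗_β E_β, sending a to the function equal to a at α and 1 elsewhere, is an injective homomorphism of orthocomplemented complete lattices: i_α(⋂S) = ⋀ i_α(S), i_α(⋃S) = ∐ i_α(S), i_α(0) = 0, i_α(1) = 1, and i_α(a^c) = i_α(a)* for all a ∈ E_α. -/

import Mathlib

/-- `F_κ`: choice functions `A` with `A α ∈ E α`, where every function having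
some component `⊥` is identified with the constant-`⊥` function (so the valid
representatives are the functions with no `⊥` component, together with the
constant-`⊥` function). -/
def FK {κ : Type*} (E : κ → Type*) [∀ α, CompleteLattice (E α)] :=
  {A : ∀ α, E α // (∀ α, A α ≠ ⊥) ∨ (∀ α, A α = ⊥)}

/-- Componentwise (pre)order on `F_κ`. -/
instance FK.preorder {κ : Type*} (E : κ → Type*) [∀ α, CompleteLattice (E α)] :
    Preorder (FK E) where
  le A B := ∀ α, A.1 α ≤ B.1 α
  le_refl A α := le_refl _
  le_trans A B C h1 h2 α := (h1 α).trans (h2 α)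

/-- The bottom element `0̂` of `F_κ`. -/
def botFK {κ : Type*} (E : κ → Type*) [∀ α, CompleteLattice (E α)] : FK E :=
  ⟨fun _ => ⊥, Or.inr fun _ => rfl⟩

open Classical in
/-- `i_α(a)`: the element of `F_κ` equal to `a` at `α` and `1` elsewhere
(which is `0̂` when `a = 0`). -/
noncomputable def iotaFK {κ : Type*} [DecidableEq κ] (E : κ → Type*) [∀ α, CompleteLattice (E α)]
    (hnt : ∀ α, (⊥ : E α) ≠ ⊤) (α : κ) (a : E α) : FK E :=
  if ha : a = ⊥ then botFK E
  else ⟨Function.update (fun β => (⊤ : E β)) α a, Or.inl fun β => by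
    rcases eq_or_ne β α with rfl | hβ
    · rw [Function.update_self]; exact ha
    · rw [Function.update_of_ne hβ]
      exact fun hb => hnt β hb.symm⟩

/-- The `*` operation on `D(F_κ)` in the lower-set model: for a lower set `D`,
`D* = {B | ∀ A ∈ D, ∃ α, B α ≤ (A α)^c}`, which realises
`(⋁_{i∈I} A^i)* = ⋁_{f : I → κ} 𝔸_f`, `𝔸_f(α) = ⋂_{f(i)=α} (A^i(α))^c`. -/
def DstarFK {κ : Type*} (E : κ → Type*) [∀ α, CompleteLattice (E α)]
    (oc : ∀ α, E α → E α) (D : Set (FK E)) : Set (FK E) :=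
  {B | ∀ A ∈ D, ∃ α, B.1 α ≤ oc α (A.1 α)}

section Aux

variable {κ : Type*} [DecidableEq κ] (E : κ → Type*) [∀ α, CompleteLattice (E α)]
  (hnt : ∀ α, (⊥ : E α) ≠ ⊤) (α : κ)

lemma iotaFK_pos (a : E α) (h : a = ⊥) : iotaFK E hnt α a = botFK E := dif_pos h

lemma iotaFK_neg_val (a : E α) (h : ¬a = ⊥) :
    (iotaFK E hnt α a).1 = Function.update (fun β => (⊤ : E β)) α a :=
  congrArg Subtype.val (dif_neg h : iotaFK E hnt α a = _)

lemma iotaFK_apply_self (a : E α) : (iotaFK E hnt α a).1 α = a := by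
  by_cases h : a = ⊥
  · rw [iotaFK_pos E hnt α a h]; simp [botFK, h]
  · rw [iotaFK_neg_val E hnt α a h]; simp

lemma mem_Iic_iota_iff (a : E α) (B : FK E) :
    B ∈ Set.Iic (iotaFK E hnt α a) ↔ B.1 α ≤ a := by
  constructor
  · intro h
    have h' := h α
    rwa [iotaFK_apply_self] at h'
  · intro h
    by_cases ha : a = ⊥
    · rw [iotaFK_pos E hnt α a ha]
      subst ha
      intro β
      rcases B.2 with h2 | h2
      · exact absurd (le_bot_iff.mp h) (h2 α)
      · exact le_of_eq (h2 β)
    · intro β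
      show B.1 β ≤ (iotaFK E hnt α a).1 β
      rw [iotaFK_neg_val E hnt α a ha]
      rcases eq_or_ne β α with rfl | hβ
      · simpa using h
      · simp [Function.update_of_ne hβ]

lemma star_Iic_iota (oc : ∀ α, E α → E α)
    (hanti : ∀ α, ∀ a b : E α, a ≤ b → oc α b ≤ oc α a)
    (hmeet : ∀ α, ∀ a : E α, a ⊓ oc α a = ⊥)
    (hjoin : ∀ α, ∀ a : E α, a ⊔ oc α a = ⊤) (a : E α) :
    DstarFK E oc (Set.Iic (iotaFK E hnt α a)) = Set.Iic (iotaFK E hnt α (oc α a)) := by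
  ext B
  rw [mem_Iic_iota_iff]
  constructor
  · intro hB
    by_cases ha : a = ⊥
    · subst ha
      have hoc : oc α ⊥ = ⊤ := by have := hjoin α ⊥; rwa [bot_sup_eq] at this
      rw [hoc]; exact le_top
    · obtain ⟨β, hβ⟩ := hB (iotaFK E hnt α a) (Set.mem_Iic.mpr le_rfl)
      rcases eq_or_ne β α with rfl | hne
      · rwa [iotaFK_apply_self] at hβ
      · have htop : (iotaFK E hnt α a).1 β = ⊤ := by
          rw [iotaFK_neg_val E hnt α a ha]
          exact Function.update_of_ne hne a (fun β => (⊤ : E β))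
        rw [htop] at hβ
        have hoc : oc β ⊤ = ⊥ := by have := hmeet β ⊤; rwa [top_inf_eq] at this
        rw [hoc, le_bot_iff] at hβ
        rcases B.2 with h2 | h2
        · exact absurd hβ (h2 β)
        · rw [h2 α]; exact bot_le
  · intro hB A hA
    exact ⟨α, hB.trans (hanti α _ _ ((mem_Iic_iota_iff E hnt α a A).mp hA))⟩

end Aux

/-- For a family `{E_α}` of (nondegenerate) orthocomplemented complete
lattices, each canonical map `i_α : E_α → ⊗_β E_β` into the tensor product
(the `**`-fixed points of `D(F_κ)`, elements being represented by lower sets,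
with `a ↦ ↓i_α(a)`) is an injective homomorphism of orthocomplemented complete
lattices: it lands in the tensor product, preserves arbitrary infima and
suprema (`∐S = (⋁S)**`), bottom, top, and orthocomplement
(`i_α(a^c) = i_α(a)*`). -/
theorem iota_logic_embedding {κ : Type*} [DecidableEq κ] (E : κ → Type*)
    [∀ α, CompleteLattice (E α)]
    (oc : ∀ α, E α → E α)
    (hanti : ∀ α, ∀ a b : E α, a ≤ b → oc α b ≤ oc α a)
    (hinv : ∀ α, ∀ a : E α, oc α (oc α a) = a)
    (hmeet : ∀ α, ∀ a : E α, a ⊓ oc α a = ⊥)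
    (hjoin : ∀ α, ∀ a : E α, a ⊔ oc α a = ⊤)
    (hnt : ∀ α, (⊥ : E α) ≠ ⊤) (α : κ) :
    Function.Injective (fun a : E α => Set.Iic (iotaFK E hnt α a)) ∧
    (∀ a : E α, DstarFK E oc (DstarFK E oc (Set.Iic (iotaFK E hnt α a))) =
        Set.Iic (iotaFK E hnt α a)) ∧
    (∀ S : Set (E α), Set.Iic (iotaFK E hnt α (sInf S)) =
        ⋂ a ∈ S, Set.Iic (iotaFK E hnt α a)) ∧
    (∀ S : Set (E α), Set.Iic (iotaFK E hnt α (sSup S)) =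
        DstarFK E oc (DstarFK E oc (⋃ a ∈ S, Set.Iic (iotaFK E hnt α a)))) ∧
    (Set.Iic (iotaFK E hnt α (⊥ : E α)) = Set.Iic (botFK E)) ∧
    (Set.Iic (iotaFK E hnt α (⊤ : E α)) = (Set.univ : Set (FK E))) ∧
    (∀ a : E α, DstarFK E oc (Set.Iic (iotaFK E hnt α a)) =
        Set.Iic (iotaFK E hnt α (oc α a))) := by
  have hstar := star_Iic_iota E hnt α oc hanti hmeet hjoin
  have hdouble : ∀ a : E α,
      DstarFK E oc (DstarFK E oc (Set.Iic (iotaFK E hnt α a))) =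
        Set.Iic (iotaFK E hnt α a) := by
    intro a
    rw [hstar a, hstar (oc α a), hinv α a]
  refine ⟨?_, hdouble, ?_, ?_, ?_, ?_, hstar⟩
  · intro a b hab
    have hab' : Set.Iic (iotaFK E hnt α a) = Set.Iic (iotaFK E hnt α b) := hab
    have h1 : iotaFK E hnt α a ∈ Set.Iic (iotaFK E hnt α b) := by
      rw [← hab']; exact Set.mem_Iic.mpr (le_refl _)
    have h2 : iotaFK E hnt α b ∈ Set.Iic (iotaFK E hnt α a) := by
      rw [hab']; exact Set.mem_Iic.mpr (le_refl _)
    rw [mem_Iic_iota_iff, iotaFK_apply_self] at h1 h2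
    exact le_antisymm h1 h2
  · intro S
    ext B
    simp only [mem_Iic_iota_iff, Set.mem_iInter]
    constructor
    · intro h a ha
      exact h.trans (sInf_le ha)
    · intro h
      exact le_sInf fun a ha => h a ha
  · intro S
    have hU : DstarFK E oc (⋃ a ∈ S, Set.Iic (iotaFK E hnt α a)) =
        Set.Iic (iotaFK E hnt α (oc α (sSup S))) := by
      ext B
      rw [mem_Iic_iota_iff]
      constructor
      · intro h
        have key : ∀ a ∈ S, B.1 α ≤ oc α a := by
          intro a ha
          have hB : B ∈ DstarFK E oc (Set.Iic (iotaFK E hnt α a)) := by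
            intro A hA
            exact h A (Set.mem_biUnion ha hA)
          rw [hstar a, mem_Iic_iota_iff] at hB
          exact hB
        have h2 : sSup S ≤ oc α (B.1 α) := by
          refine sSup_le fun a ha => ?_
          calc a = oc α (oc α a) := (hinv α a).symm
            _ ≤ oc α (B.1 α) := hanti α _ _ (key a ha)
        calc B.1 α = oc α (oc α (B.1 α)) := (hinv α _).symm
          _ ≤ oc α (sSup S) := hanti α _ _ h2
      · intro h A hA
        rcases Set.mem_iUnion₂.mp hA with ⟨a, ha, hA'⟩
        refine ⟨α, h.trans ?_⟩
        exact (hanti α _ _ (le_sSup ha)).trans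
          (hanti α _ _ ((mem_Iic_iota_iff E hnt α a A).mp hA'))
    rw [hU, hstar (oc α (sSup S)), hinv α (sSup S)]
  · rw [show iotaFK E hnt α (⊥ : E α) = botFK E from dif_pos rfl]
  · rw [Set.eq_univ_iff_forall]
    intro B
    exact (mem_Iic_iota_iff E hnt α ⊤ B).mpr le_top
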